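/- Let α, λ, μ be rational numbers, let s assign a rational number s_I to each 4-element subset I of {1,…,7}, and let p_1,…,p_7 be rationals. If (s,p) is F-nef with parameters (α,λ,μ), then for every 2-element subset {i,j} of {1,…,7}: 18·c_{ij} + (−8α − 18λ + 10μ)(p_i + p_j) + (−4α − 18λ + 10μ)·∑_{k∉{i,j}} p_k ≥ 0, where c_{ij} = (1/3)·∑_{I ⊇ {i,j}} s_I + (α+λ)(p_i + p_j) + λ·∑_{k∉{i,j}} p_k (the sum over I ranging over 4-element subsets of {1,…,7}). -/
import Mathlib


open Finset

/-- `(s, p)` is F-nef with parameters `(a, l, m)` (`α`, `λ`, `μ`): the value of the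
divisor `D = ∑ s_I S_I + ∑ p_i P_i` on every F-curve of `M̄_{0,7}` is nonnegative,
for the three combinatorial types `(1:1:1:4)`, `(1:1:2:3)`, `(1:2:2:2)` of partitions
`(A,B,C,D)` of the marked points. -/
def FNef (a l m : ℚ) (s : Finset (Fin 7) → ℚ) (p : Fin 7 → ℚ) : Prop :=
  ∀ A B C D : Finset (Fin 7),
    Disjoint A B → Disjoint A C → Disjoint A D →
    Disjoint B C → Disjoint B D → Disjoint C D →
    A ∪ B ∪ C ∪ D = univ →
    A.Nonempty → B.Nonempty → C.Nonempty → D.Nonempty →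
    ((A.card = 1 ∧ B.card = 1 ∧ C.card = 1 ∧ D.card = 4 →
        0 ≤ (∑ I ∈ univ.filter (fun I : Finset (Fin 7) => I.card = 4 ∧
                (I ∩ A).card = 1 ∧ (I ∩ B).card = 1 ∧ (I ∩ C).card = 1 ∧ (I ∩ D).card = 1),
              s I)
            + (2*a + 3*l - m) * (∑ i ∈ A ∪ B ∪ C, p i)
            + (3*l - m) * (∑ j ∈ D, p j)) ∧
     (A.card = 1 ∧ B.card = 1 ∧ C.card = 2 ∧ D.card = 3 →
        0 ≤ (∑ I ∈ univ.filter (fun I : Finset (Fin 7) => I.card = 4 ∧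
                (I ∩ A).card = 1 ∧ (I ∩ B).card = 1 ∧ (I ∩ C).card = 1 ∧ (I ∩ D).card = 1),
              s I)
            + (a + m) * (∑ i ∈ A ∪ B, p i)
            + (-a + m) * (∑ j ∈ C, p j)
            + m * (∑ k ∈ D, p k)) ∧
     (A.card = 1 ∧ B.card = 2 ∧ C.card = 2 ∧ D.card = 2 →
        0 ≤ (∑ I ∈ univ.filter (fun I : Finset (Fin 7) => I.card = 4 ∧
                (I ∩ A).card = 1 ∧ (I ∩ B).card = 1 ∧ (I ∩ C).card = 1 ∧ (I ∩ D).card = 1),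
              s I)
            + 3*(m - l) * (∑ i ∈ A, p i)
            + (-a + 3*(m - l)) * (∑ j ∈ B ∪ C ∪ D, p j)))

/-- The coefficient `c_J` of the boundary divisor `Δ_J` in the obvious representative of
`D = ∑ s_I S_I + ∑ p_i P_i`, for `J` of cardinality 2 or 3. -/
def cJ (a l m : ℚ) (s : Finset (Fin 7) → ℚ) (p : Fin 7 → ℚ) (J : Finset (Fin 7)) : ℚ :=
  if J.card = 2 then
    (1/3) * (∑ I ∈ univ.filter (fun I : Finset (Fin 7) => I.card = 4 ∧ J ⊆ I), s I)
      + (a + l) * (∑ i ∈ J, p i) + l * (∑ k ∈ Jᶜ, p k)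
  else
    (1/3) * (∑ I ∈ univ.filter (fun I : Finset (Fin 7) => I.card = 4 ∧ (I ∩ J).card = 2), s I)
      + m * (∑ k, p k)


set_option maxRecDepth 100000 in
set_option maxHeartbeats 4000000 in
private lemma count1 : ∀ (i j : Fin 7), i ≠ j → ∀ (I : Finset (Fin 7)),
    (((({i,j} : Finset (Fin 7))ᶜ).powersetCard 2).filter (fun C => I.card = 4 ∧
      (I ∩ {i}).card = 1 ∧ (I ∩ {j}).card = 1 ∧ (I ∩ C).card = 1 ∧
      (I ∩ ((({i,j} : Finset (Fin 7))ᶜ) \ C)).card = 1)).card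
    = (if I.card = 4 ∧ ({i,j} : Finset (Fin 7)) ⊆ I then 6 else 0) := by decide

set_option maxRecDepth 100000 in
set_option maxHeartbeats 1000000 in
private lemma count2 : ∀ (i j k : Fin 7), i ≠ j → k ∈ ({i,j} : Finset (Fin 7))ᶜ →
    (((({i,j} : Finset (Fin 7))ᶜ).powersetCard 2).filter (fun C => k ∈ C)).card = 4 := by
  decide

/-- Summing the F-inequalities over the ten F-curves of type `(1:1:2:3)` with singleton
spine tails `{i}` and `{j}` gives
`18 c_{ij} + (−8α−18λ+10μ)(p_i+p_j) + (−4α−18λ+10μ) ∑_{k∉{i,j}} p_k ≥ 0`. -/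
theorem stmt5 (a l m : ℚ) (s : Finset (Fin 7) → ℚ) (p : Fin 7 → ℚ)
    (hF : FNef a l m s p) (i j : Fin 7) (hij : i ≠ j) :
    0 ≤ 18 * cJ a l m s p {i, j}
        + (-8*a - 18*l + 10*m) * (p i + p j)
        + (-4*a - 18*l + 10*m) * (∑ k ∈ ({i, j}ᶜ : Finset (Fin 7)), p k) := by
  classical
  set K : Finset (Fin 7) := ({i,j} : Finset (Fin 7))ᶜ with hK
  have hij2 : ({i,j} : Finset (Fin 7)).card = 2 := card_pair hij
  have hKcard : K.card = 5 := by
    rw [hK, card_compl, hij2]; rfl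
  set P : Finset (Finset (Fin 7)) := K.powersetCard 2 with hP
  have hPcard : P.card = 10 := by
    rw [hP, card_powersetCard, hKcard]
    rfl
  -- the individual F-inequalities
  have key : ∀ C ∈ P,
      0 ≤ (∑ I ∈ univ.filter (fun I : Finset (Fin 7) => I.card = 4 ∧
            (I ∩ ({i} : Finset (Fin 7))).card = 1 ∧ (I ∩ ({j} : Finset (Fin 7))).card = 1 ∧
            (I ∩ C).card = 1 ∧ (I ∩ (K \ C)).card = 1), s I)
          + (a + m) * (∑ x ∈ (({i} : Finset (Fin 7)) ∪ {j}), p x)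
          + (-a + m) * (∑ x ∈ C, p x) + m * (∑ x ∈ K \ C, p x) := by
    intro C hC
    obtain ⟨hCsub, hCcard⟩ := mem_powersetCard.mp hC
    have hiK : i ∉ K := by simp [hK]
    have hjK : j ∉ K := by simp [hK]
    have hiC : i ∉ C := fun h => hiK (hCsub h)
    have hjC : j ∉ C := fun h => hjK (hCsub h)
    have hDcard : (K \ C).card = 3 := by
      rw [card_sdiff_of_subset hCsub, hKcard, hCcard]
    refine (hF {i} {j} C (K \ C) ?_ ?_ ?_ ?_ ?_ ?_ ?_ ?_ ?_ ?_ ?_).2.1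
      ⟨card_singleton i, card_singleton j, hCcard, hDcard⟩
    · exact disjoint_singleton.mpr hij
    · exact disjoint_singleton_left.mpr hiC
    · exact disjoint_singleton_left.mpr (fun h => hiK (mem_sdiff.mp h).1)
    · exact disjoint_singleton_left.mpr hjC
    · exact disjoint_singleton_left.mpr (fun h => hjK (mem_sdiff.mp h).1)
    · exact disjoint_sdiff
    · rw [union_assoc, union_sdiff_of_subset hCsub]
      have : ({i} : Finset (Fin 7)) ∪ {j} = {i, j} := by
        ext x; simp [or_comm]
      rw [this, hK, union_compl]
    · exact singleton_nonempty i
    · exact singleton_nonempty j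
    · exact card_pos.mp (by rw [hCcard]; norm_num)
    · exact card_pos.mp (by rw [hDcard]; norm_num)
  have hsum := Finset.sum_nonneg key
  -- Σ over K of p
  set Sp : ℚ := ∑ k ∈ K, p k with hSp
  set S : ℚ := ∑ I ∈ univ.filter (fun I : Finset (Fin 7) => I.card = 4 ∧
      ({i,j} : Finset (Fin 7)) ⊆ I), s I with hS
  -- piece 3: ∑_C ∑_{x ∈ C} p x = 4 Sp
  have hP3 : ∑ C ∈ P, (∑ x ∈ C, p x) = 4 * Sp := by
    have h1 : ∀ C ∈ P, (∑ x ∈ C, p x) = ∑ x ∈ K, (if x ∈ C then p x else 0) := by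
      intro C hC
      obtain ⟨hCsub, -⟩ := mem_powersetCard.mp hC
      rw [Finset.sum_ite_mem, inter_eq_right.mpr hCsub]
    rw [Finset.sum_congr rfl h1, Finset.sum_comm]
    rw [hSp, Finset.mul_sum]
    refine Finset.sum_congr rfl fun x hx => ?_
    rw [← Finset.sum_filter, Finset.sum_const, count2 i j x hij (hK ▸ hx)]
    ring
  -- piece 4: ∑_C ∑_{x ∈ K \ C} p x = 6 Sp
  have hP4 : ∑ C ∈ P, (∑ x ∈ K \ C, p x) = 6 * Sp := by
    have h1 : ∀ C ∈ P, (∑ x ∈ K \ C, p x) = Sp - ∑ x ∈ C, p x := by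
      intro C hC
      obtain ⟨hCsub, -⟩ := mem_powersetCard.mp hC
      rw [Finset.sum_sdiff_eq_sub hCsub]
    rw [Finset.sum_congr rfl h1, Finset.sum_sub_distrib, Finset.sum_const, hPcard, hP3]
    ring
  -- piece 1: ∑_C (s-sum) = 6 S
  have hP1 : ∑ C ∈ P, (∑ I ∈ univ.filter (fun I : Finset (Fin 7) => I.card = 4 ∧
      (I ∩ ({i} : Finset (Fin 7))).card = 1 ∧ (I ∩ ({j} : Finset (Fin 7))).card = 1 ∧
      (I ∩ C).card = 1 ∧ (I ∩ (K \ C)).card = 1), s I) = 6 * S := by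
    have h1 : ∀ C ∈ P, (∑ I ∈ univ.filter (fun I : Finset (Fin 7) => I.card = 4 ∧
        (I ∩ ({i} : Finset (Fin 7))).card = 1 ∧ (I ∩ ({j} : Finset (Fin 7))).card = 1 ∧
        (I ∩ C).card = 1 ∧ (I ∩ (K \ C)).card = 1), s I)
        = ∑ I ∈ (univ : Finset (Finset (Fin 7))), (if (I.card = 4 ∧
        (I ∩ ({i} : Finset (Fin 7))).card = 1 ∧ (I ∩ ({j} : Finset (Fin 7))).card = 1 ∧
        (I ∩ C).card = 1 ∧ (I ∩ (K \ C)).card = 1) then s I else 0) := by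
      intro C _
      rw [Finset.sum_filter]
    rw [Finset.sum_congr rfl h1, Finset.sum_comm]
    rw [hS, Finset.mul_sum, Finset.sum_filter]
    refine Finset.sum_congr rfl fun I _ => ?_
    rw [← Finset.sum_filter, Finset.sum_const]
    have := count1 i j hij I
    rw [hP, hK]
    rw [show ((K.powersetCard 2).filter (fun C => I.card = 4 ∧
      (I ∩ ({i} : Finset (Fin 7))).card = 1 ∧ (I ∩ ({j} : Finset (Fin 7))).card = 1 ∧
      (I ∩ C).card = 1 ∧ (I ∩ (K \ C)).card = 1)).card
      = (if I.card = 4 ∧ ({i,j} : Finset (Fin 7)) ⊆ I then 6 else 0) from hK ▸ this]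
    split <;> simp
  -- assemble
  rw [Finset.sum_add_distrib, Finset.sum_add_distrib, Finset.sum_add_distrib,
    ← Finset.mul_sum, ← Finset.mul_sum, ← Finset.mul_sum, Finset.sum_const, hPcard, hP1, hP3, hP4] at hsum
  have hpair : (∑ x ∈ (({i} : Finset (Fin 7)) ∪ {j}), p x) = p i + p j := by
    rw [show (({i} : Finset (Fin 7)) ∪ {j}) = {i, j} from by ext x; simp [or_comm],
      Finset.sum_pair hij]
  rw [hpair, nsmul_eq_mul] at hsum
  have hcJ : cJ a l m s p {i, j} = (1/3) * S + (a + l) * (p i + p j) + l * Sp := by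
    rw [cJ, if_pos hij2, Finset.sum_pair hij, hS, hSp, hK]
  rw [hcJ]
  push_cast at hsum
  nlinarith [hsum]
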